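/- Goal-conditional policy gradient theorem: the gradient of the expected return η(θ) = Σ_g p(g) Σ_τ p(τ | g, θ) Σ_{t=1}^T r(s_t, g) with respect to θ equals Σ_g p(g) Σ_τ p(τ | g, θ) Σ_{t=1}^{T−1} ∇ log p(a_t | s_t, g, θ) Σ_{t'=t+1}^T r(s_{t'}, g); that is, terms pairing rewards with score functions at the same or later time steps vanish. -/

import Mathlib

open Finset

/-- A trajectory `s_1, a_1, …, s_T` with horizon `T = n + 1`. -/
abbrev Traj (S A : Type) (n : ℕ) := (Fin (n + 1) → S) × (Fin n → A)

/-- `p(τ ∣ g, θ) = p(s_1) ∏_{t=1}^{T-1} p(a_t ∣ s_t, g, θ) p(s_{t+1} ∣ s_t, a_t)`. -/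
def trajProb {S A G : Type} (n : ℕ) (init : S → ℝ) (trans : S → A → S → ℝ)
    (pol : ℝ → G → S → A → ℝ) (θ : ℝ) (g : G) (τ : Traj S A n) : ℝ :=
  init (τ.1 0) * ∏ t : Fin n,
    pol θ g (τ.1 t.castSucc) (τ.2 t) * trans (τ.1 t.castSucc) (τ.2 t) (τ.1 t.succ)

/-- The expected return `η(θ) = ∑_g p(g) ∑_τ p(τ ∣ g, θ) ∑_{t=1}^T r(s_t, g)`. -/
def expReturn {S A G : Type} [Fintype S] [Fintype A] [Fintype G] (n : ℕ)
    (init : S → ℝ) (trans : S → A → S → ℝ) (pol : ℝ → G → S → A → ℝ)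
    (pG : G → ℝ) (r : S → G → ℝ) (θ : ℝ) : ℝ :=
  ∑ g : G, pG g * ∑ τ : Traj S A n,
    trajProb n init trans pol θ g τ * ∑ t : Fin (n + 1), r (τ.1 t) g

section PGAux
variable {S A : Type} [Fintype S] [Fintype A]

def pgVal : (n : ℕ) → (Fin n → S → A → S → ℝ) → S → ℝ
  | 0, _, _ => 1
  | n + 1, f, s => ∑ a : A, ∑ s' : S, f 0 s a s' * pgVal n (fun u => f u.succ) s'

lemma pgVal_one : ∀ (n : ℕ) (f : Fin n → S → A → S → ℝ),
    (∀ u s, ∑ a : A, ∑ s' : S, f u s a s' = 1) → ∀ s, pgVal n f s = 1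
  | 0, _, _, _ => rfl
  | n + 1, f, h, s => by
    rw [pgVal]
    have : ∀ s', pgVal n (fun u => f u.succ) s' = 1 :=
      pgVal_one n _ (fun u s => h u.succ s)
    simp only [this, mul_one]
    exact h 0 s

lemma pgVal_zero : ∀ (n : ℕ) (f : Fin n → S → A → S → ℝ) (t : Fin n),
    (∀ s, ∑ a : A, ∑ s' : S, f t s a s' = 0) →
    (∀ u, t < u → ∀ s, ∑ a : A, ∑ s' : S, f u s a s' = 1) → ∀ s, pgVal n f s = 0
  | 0, _, t, _, _, _ => t.elim0
  | n + 1, f, t, h0, h1, s => by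
    rw [pgVal]
    rcases Fin.eq_zero_or_eq_succ t with rfl | ⟨v, rfl⟩
    · have : ∀ s', pgVal n (fun u => f u.succ) s' = 1 :=
        pgVal_one n _ (fun u s => h1 u.succ (Fin.succ_pos u) s)
      simp only [this, mul_one]
      exact h0 s
    · have : ∀ s', pgVal n (fun u => f u.succ) s' = 0 :=
        pgVal_zero n _ v h0 (fun u hu s => h1 u.succ (by simpa using hu) s)
      simp only [this, mul_zero, Finset.sum_const_zero]

lemma sum_traj : ∀ (n : ℕ) (w : S → ℝ) (f : Fin n → S → A → S → ℝ),
    ∑ τ : Traj S A n, w (τ.1 0) * ∏ u : Fin n, f u (τ.1 u.castSucc) (τ.2 u) (τ.1 u.succ)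
      = ∑ s : S, w s * pgVal n f s
  | 0, w, f => by
    rw [Fintype.sum_prod_type]
    rw [← Equiv.sum_comp (Equiv.funUnique (Fin 1) S).symm]
    simp [pgVal, Equiv.funUnique]
  | n + 1, w, f => by
    rw [Fintype.sum_prod_type]
    rw [← Equiv.sum_comp (Fin.consEquiv fun _ => S), Fintype.sum_prod_type]
    simp only [Fin.consEquiv_apply]
    have hb : ∀ (s : S) (h : Fin (n+1) → S),
        (∑ b : Fin (n+1) → A, w ((Fin.cons s h : Fin (n+2) → S) 0) *
          ∏ u : Fin (n+1), f u ((Fin.cons s h : Fin (n+2) → S) u.castSucc) (b u)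
            ((Fin.cons s h : Fin (n+2) → S) u.succ))
        = ∑ p : A × (Fin n → A), w s *
            (f 0 s p.1 (h 0) * ∏ u : Fin n, f u.succ (h u.castSucc) (p.2 u) (h u.succ)) := by
      intro s h
      rw [← Equiv.sum_comp (Fin.consEquiv fun _ => A)]
      refine Finset.sum_congr rfl fun p _ => ?_
      simp only [Fin.consEquiv_apply, Fin.cons_zero]
      congr 1
      rw [Fin.prod_univ_succ]
      simp only [Fin.castSucc_zero, Fin.cons_zero, Fin.succ_zero_eq_one]
      have h1 : (Fin.cons s h : Fin (n+2) → S) 1 = h 0 := by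
        rw [show (1 : Fin (n+2)) = (0 : Fin (n+1)).succ by simp]
        simp
      rw [h1]
      refine congrArg _ (Finset.prod_congr rfl fun u _ => ?_)
      rw [← Fin.succ_castSucc]
      simp
    simp only [hb]
    refine Finset.sum_congr rfl fun s _ => ?_
    rw [pgVal]
    have ih : ∀ a : A, ∑ τ' : Traj S A n, f 0 s a (τ'.1 0) *
        ∏ u : Fin n, f u.succ (τ'.1 u.castSucc) (τ'.2 u) (τ'.1 u.succ)
        = ∑ s' : S, f 0 s a s' * pgVal n (fun u => f u.succ) s' :=
      fun a => sum_traj n (fun s' => f 0 s a s') (fun u => f u.succ)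
    rw [Finset.sum_comm, Fintype.sum_prod_type, Finset.mul_sum]
    refine Finset.sum_congr rfl fun a _ => ?_
    rw [← ih a, Fintype.sum_prod_type, Finset.mul_sum, Finset.sum_comm]
    refine Finset.sum_congr rfl fun h _ => ?_
    rw [Finset.mul_sum]

lemma pg_vanish (n : ℕ) (init : S → ℝ) (trans : S → A → S → ℝ)
    (p : S → A → ℝ) (d : S → A → ℝ) (rw : S → ℝ)
    (htrans1 : ∀ s a, ∑ s' : S, trans s a s' = 1)
    (hp1 : ∀ s, ∑ a : A, p s a = 1) (hd0 : ∀ s, ∑ a : A, d s a = 0)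
    (t : Fin n) (t' : Fin (n + 1)) (ht : t' ≤ t.castSucc) :
    ∑ τ : Traj S A n, (init (τ.1 0) *
      ((∏ u ∈ univ.erase t, p (τ.1 u.castSucc) (τ.2 u) *
          trans (τ.1 u.castSucc) (τ.2 u) (τ.1 u.succ)) *
       (d (τ.1 t.castSucc) (τ.2 t) * trans (τ.1 t.castSucc) (τ.2 t) (τ.1 t.succ)))) *
      rw (τ.1 t') = 0 := by
  classical
  set fD : Fin n → S → A → S → ℝ :=
    fun u s a s' => if u = t then d s a * trans s a s' else p s a * trans s a s' with hfD
  have hsum0 : ∀ s, ∑ a : A, ∑ s' : S, fD t s a s' = 0 := by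
    intro s
    simp only [hfD, if_pos rfl]
    have : ∀ a : A, ∑ s' : S, d s a * trans s a s' = d s a := by
      intro a; rw [← Finset.mul_sum, htrans1, mul_one]
    simp only [this]; exact hd0 s
  have hsum1 : ∀ u, t < u → ∀ s, ∑ a : A, ∑ s' : S, fD u s a s' = 1 := by
    intro u hu s
    simp only [hfD, if_neg (ne_of_gt hu)]
    have : ∀ a : A, ∑ s' : S, p s a * trans s a s' = p s a := by
      intro a; rw [← Finset.mul_sum, htrans1, mul_one]
    simp only [this]; exact hp1 s
  rcases Fin.eq_zero_or_eq_succ t' with rfl | ⟨v, rfl⟩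
  · have key : ∀ τ : Traj S A n, (init (τ.1 0) *
        ((∏ u ∈ univ.erase t, p (τ.1 u.castSucc) (τ.2 u) *
            trans (τ.1 u.castSucc) (τ.2 u) (τ.1 u.succ)) *
         (d (τ.1 t.castSucc) (τ.2 t) * trans (τ.1 t.castSucc) (τ.2 t) (τ.1 t.succ)))) *
        rw (τ.1 0)
        = (init (τ.1 0) * rw (τ.1 0)) *
          ∏ u : Fin n, fD u (τ.1 u.castSucc) (τ.2 u) (τ.1 u.succ) := by
      intro τ
      rw [← Finset.mul_prod_erase univ _ (mem_univ t)]
      have h1 : fD t (τ.1 t.castSucc) (τ.2 t) (τ.1 t.succ)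
          = d (τ.1 t.castSucc) (τ.2 t) * trans (τ.1 t.castSucc) (τ.2 t) (τ.1 t.succ) := by
        simp [hfD]
      have h2 : ∏ u ∈ univ.erase t, fD u (τ.1 u.castSucc) (τ.2 u) (τ.1 u.succ)
          = ∏ u ∈ univ.erase t, p (τ.1 u.castSucc) (τ.2 u) *
              trans (τ.1 u.castSucc) (τ.2 u) (τ.1 u.succ) := by
        refine Finset.prod_congr rfl fun u hu => ?_
        simp [hfD, (Finset.mem_erase.mp hu).1]
      rw [h1, h2]; ring
    simp only [key]
    rw [sum_traj n (fun s => init s * rw s) fD]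
    simp only [pgVal_zero n fD t hsum0 hsum1, mul_zero, Finset.sum_const_zero]
  · have hv : v < t := by
      have := ht
      rw [Fin.le_def] at this
      simp only [Fin.val_succ, Fin.coe_castSucc] at this
      rw [Fin.lt_def]; omega
    set fF : Fin n → S → A → S → ℝ :=
      fun u s a s' => if u = v then (p s a * trans s a s') * rw s' else fD u s a s' with hfF
    have hF0 : ∀ s, ∑ a : A, ∑ s' : S, fF t s a s' = 0 := by
      intro s
      simp only [hfF, if_neg hv.ne']
      exact hsum0 s
    have hF1 : ∀ u, t < u → ∀ s, ∑ a : A, ∑ s' : S, fF u s a s' = 1 := by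
      intro u hu s
      simp only [hfF, if_neg (ne_of_gt (hv.trans hu))]
      exact hsum1 u hu s
    have key : ∀ τ : Traj S A n, (init (τ.1 0) *
        ((∏ u ∈ univ.erase t, p (τ.1 u.castSucc) (τ.2 u) *
            trans (τ.1 u.castSucc) (τ.2 u) (τ.1 u.succ)) *
         (d (τ.1 t.castSucc) (τ.2 t) * trans (τ.1 t.castSucc) (τ.2 t) (τ.1 t.succ)))) *
        rw (τ.1 v.succ)
        = init (τ.1 0) * ∏ u : Fin n, fF u (τ.1 u.castSucc) (τ.2 u) (τ.1 u.succ) := by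
      intro τ
      have hvmem : v ∈ univ.erase t := Finset.mem_erase.mpr ⟨hv.ne, mem_univ v⟩
      rw [← Finset.mul_prod_erase univ _ (mem_univ t),
          ← Finset.mul_prod_erase _ _ hvmem,
          ← Finset.mul_prod_erase (univ.erase t)
            (fun u => fF u (τ.1 u.castSucc) (τ.2 u) (τ.1 u.succ)) hvmem]
      have h1 : fF t (τ.1 t.castSucc) (τ.2 t) (τ.1 t.succ)
          = d (τ.1 t.castSucc) (τ.2 t) * trans (τ.1 t.castSucc) (τ.2 t) (τ.1 t.succ) := by
        simp [hfF, hfD, hv.ne']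
      have h2 : fF v (τ.1 v.castSucc) (τ.2 v) (τ.1 v.succ)
          = (p (τ.1 v.castSucc) (τ.2 v) * trans (τ.1 v.castSucc) (τ.2 v) (τ.1 v.succ)) *
            rw (τ.1 v.succ) := by simp [hfF]
      have h3 : ∏ u ∈ (univ.erase t).erase v, fF u (τ.1 u.castSucc) (τ.2 u) (τ.1 u.succ)
          = ∏ u ∈ (univ.erase t).erase v, p (τ.1 u.castSucc) (τ.2 u) *
              trans (τ.1 u.castSucc) (τ.2 u) (τ.1 u.succ) := by
        refine Finset.prod_congr rfl fun u hu => ?_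
        have h4 := Finset.mem_erase.mp hu
        have h5 := Finset.mem_erase.mp h4.2
        simp [hfF, hfD, h4.1, h5.1]
      rw [h1, h2, h3]; ring
    simp only [key]
    rw [sum_traj n init fF]
    simp only [pgVal_zero n fF t hF0 hF1, mul_zero, Finset.sum_const_zero]

end PGAux

/-- the goal-conditional policy gradient theorem.
`∇η(θ) = ∑_g p(g) ∑_τ p(τ∣g,θ) ∑_{t=1}^{T-1} ∇ log p(a_t∣s_t,g,θ) ∑_{t'=t+1}^T r(s_{t'}, g)`. -/
theorem goal_conditional_policy_gradient {S A G : Type} [Fintype S] [Fintype A] [Fintype G]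
    (n : ℕ) (init : S → ℝ) (trans : S → A → S → ℝ) (pol : ℝ → G → S → A → ℝ)
    (pG : G → ℝ) (r : S → G → ℝ)
    (hinit : ∀ s, 0 < init s) (hinit1 : ∑ s : S, init s = 1)
    (htrans : ∀ s a s', 0 < trans s a s') (htrans1 : ∀ s a, ∑ s' : S, trans s a s' = 1)
    (hpol : ∀ (θ' : ℝ) (g : G) (s : S) (a : A), 0 < pol θ' g s a)
    (hpold : ∀ (g : G) (s : S) (a : A), Differentiable ℝ fun θ' => pol θ' g s a)
    (hpol1 : ∀ (θ' : ℝ) (g : G) (s : S), ∑ a : A, pol θ' g s a = 1)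
    (hpG : ∀ g, 0 ≤ pG g) (hpG1 : ∑ g : G, pG g = 1)
    (θ : ℝ) :
    deriv (expReturn n init trans pol pG r) θ =
      ∑ g : G, pG g * ∑ τ : Traj S A n, trajProb n init trans pol θ g τ *
        ∑ t : Fin n,
          deriv (fun θ' => Real.log (pol θ' g (τ.1 t.castSucc) (τ.2 t))) θ *
            ∑ t' ∈ univ.filter (fun t' : Fin (n + 1) => t.castSucc < t'), r (τ.1 t') g := by
  classical
  have hscore : ∀ (g : G) (s : S) (a : A),
      deriv (fun θ' => Real.log (pol θ' g s a)) θ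
        = deriv (fun θ' => pol θ' g s a) θ / pol θ g s a :=
    fun g s a => ((hpold g s a θ).hasDerivAt.log (hpol θ g s a).ne').deriv
  have hd0 : ∀ (g : G) (s : S), ∑ a : A, deriv (fun θ' => pol θ' g s a) θ = 0 := by
    intro g s
    have h1 : HasDerivAt (fun θ' => ∑ a : A, pol θ' g s a)
        (∑ a : A, deriv (fun θ' => pol θ' g s a) θ) θ :=
      HasDerivAt.fun_sum fun a _ => (hpold g s a θ).hasDerivAt
    have h2 : (fun θ' => ∑ a : A, pol θ' g s a) = fun _ => (1 : ℝ) :=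
      funext fun θ' => hpol1 θ' g s
    rw [h2] at h1
    exact h1.unique (hasDerivAt_const θ 1)
  let D : G → Traj S A n → Fin n → ℝ := fun g τ t =>
    init (τ.1 0) * ((∏ u ∈ univ.erase t, pol θ g (τ.1 u.castSucc) (τ.2 u) *
      trans (τ.1 u.castSucc) (τ.2 u) (τ.1 u.succ)) *
      (deriv (fun θ' => pol θ' g (τ.1 t.castSucc) (τ.2 t)) θ *
        trans (τ.1 t.castSucc) (τ.2 t) (τ.1 t.succ)))
  have hDP : ∀ (g : G) (τ : Traj S A n),
      HasDerivAt (fun θ' => trajProb n init trans pol θ' g τ) (∑ t : Fin n, D g τ t) θ := by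
    intro g τ
    have hprod : HasDerivAt (fun θ' => ∏ t : Fin n, pol θ' g (τ.1 t.castSucc) (τ.2 t) *
        trans (τ.1 t.castSucc) (τ.2 t) (τ.1 t.succ))
        (∑ t : Fin n, (∏ u ∈ univ.erase t, pol θ g (τ.1 u.castSucc) (τ.2 u) *
          trans (τ.1 u.castSucc) (τ.2 u) (τ.1 u.succ)) •
          (deriv (fun θ' => pol θ' g (τ.1 t.castSucc) (τ.2 t)) θ *
            trans (τ.1 t.castSucc) (τ.2 t) (τ.1 t.succ))) θ :=
      HasDerivAt.fun_finsetProd fun t _ =>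
        (hpold g (τ.1 t.castSucc) (τ.2 t) θ).hasDerivAt.mul_const _
    have h := hprod.const_mul (init (τ.1 0))
    rw [Finset.mul_sum] at h
    simp only [smul_eq_mul] at h
    exact h
  have hDE : HasDerivAt (expReturn n init trans pol pG r)
      (∑ g : G, pG g * ∑ τ : Traj S A n,
        (∑ t : Fin n, D g τ t) * ∑ t : Fin (n + 1), r (τ.1 t) g) θ := by
    have h : HasDerivAt (fun θ' => ∑ g : G, pG g * ∑ τ : Traj S A n,
        trajProb n init trans pol θ' g τ * ∑ t : Fin (n + 1), r (τ.1 t) g)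
        (∑ g : G, pG g * ∑ τ : Traj S A n,
          (∑ t : Fin n, D g τ t) * ∑ t : Fin (n + 1), r (τ.1 t) g) θ :=
      HasDerivAt.fun_sum fun g _ =>
        (HasDerivAt.fun_sum fun τ _ => (hDP g τ).mul_const _).const_mul _
    exact h
  rw [hDE.deriv]
  refine Finset.sum_congr rfl fun g _ => ?_
  congr 1
  have hRHS : ∀ τ : Traj S A n, trajProb n init trans pol θ g τ *
      ∑ t : Fin n, deriv (fun θ' => Real.log (pol θ' g (τ.1 t.castSucc) (τ.2 t))) θ *
        ∑ t' ∈ univ.filter (fun t' : Fin (n + 1) => t.castSucc < t'), r (τ.1 t') g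
      = ∑ t : Fin n, D g τ t *
          ∑ t' ∈ univ.filter (fun t' : Fin (n + 1) => t.castSucc < t'), r (τ.1 t') g := by
    intro τ
    rw [Finset.mul_sum]
    refine Finset.sum_congr rfl fun t _ => ?_
    rw [hscore]
    have hP : trajProb n init trans pol θ g τ = init (τ.1 0) *
        ((pol θ g (τ.1 t.castSucc) (τ.2 t) * trans (τ.1 t.castSucc) (τ.2 t) (τ.1 t.succ)) *
         ∏ u ∈ univ.erase t, pol θ g (τ.1 u.castSucc) (τ.2 u) *
           trans (τ.1 u.castSucc) (τ.2 u) (τ.1 u.succ)) := by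
      rw [trajProb, ← Finset.mul_prod_erase univ _ (mem_univ t)]
    rw [hP]
    have hpne : pol θ g (τ.1 t.castSucc) (τ.2 t) ≠ 0 := (hpol θ g (τ.1 t.castSucc) (τ.2 t)).ne'
    show _ = D g τ t * _
    simp only [D]
    field_simp
  have hvanish : ∀ (t : Fin n) (t' : Fin (n + 1)), t' ≤ t.castSucc →
      ∑ τ : Traj S A n, D g τ t * r (τ.1 t') g = 0 := by
    intro t t' ht
    exact pg_vanish n init trans (pol θ g)
      (fun s a => deriv (fun θ' => pol θ' g s a) θ) (fun s => r s g)
      (fun s a => htrans1 s a) (fun s => hpol1 θ g s) (fun s => hd0 g s) t t' ht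
  calc ∑ τ : Traj S A n, (∑ t : Fin n, D g τ t) * ∑ t : Fin (n + 1), r (τ.1 t) g
      = ∑ t : Fin n, ∑ τ : Traj S A n, D g τ t * ∑ t' : Fin (n + 1), r (τ.1 t') g := by
        simp only [Finset.sum_mul]
        exact Finset.sum_comm
    _ = ∑ t : Fin n, ∑ τ : Traj S A n, D g τ t *
          ∑ t' ∈ univ.filter (fun t' : Fin (n + 1) => t.castSucc < t'), r (τ.1 t') g := by
        refine Finset.sum_congr rfl fun t _ => ?_
        have hsplit : ∀ τ : Traj S A n, (∑ t' : Fin (n + 1), r (τ.1 t') g)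
            = (∑ t' ∈ univ.filter (fun t' : Fin (n + 1) => t.castSucc < t'), r (τ.1 t') g)
              + ∑ t' ∈ univ.filter (fun t' : Fin (n + 1) => ¬ t.castSucc < t'), r (τ.1 t') g :=
          fun τ => (Finset.sum_filter_add_sum_filter_not univ _ _).symm
        simp only [hsplit, mul_add, Finset.sum_add_distrib]
        have hz : ∑ τ : Traj S A n, D g τ t *
            ∑ t' ∈ univ.filter (fun t' : Fin (n + 1) => ¬ t.castSucc < t'), r (τ.1 t') g = 0 := by
          simp only [Finset.mul_sum]
          rw [Finset.sum_comm]
          refine Finset.sum_eq_zero fun t' ht' => ?_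
          have hle : t' ≤ t.castSucc := not_lt.mp (Finset.mem_filter.mp ht').2
          exact hvanish t t' hle
        rw [hz, add_zero]
    _ = ∑ τ : Traj S A n, ∑ t : Fin n, D g τ t *
          ∑ t' ∈ univ.filter (fun t' : Fin (n + 1) => t.castSucc < t'), r (τ.1 t') g :=
        Finset.sum_comm
    _ = ∑ τ : Traj S A n, trajProb n init trans pol θ g τ *
          ∑ t : Fin n, deriv (fun θ' => Real.log (pol θ' g (τ.1 t.castSucc) (τ.2 t))) θ *
            ∑ t' ∈ univ.filter (fun t' : Fin (n + 1) => t.castSucc < t'), r (τ.1 t') g := by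
        refine Finset.sum_congr rfl fun τ _ => (hRHS τ).symm
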